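/- The class of linearly ordered sets equipped with one strict order reversing unary operation has the amalgamation property: whenever A, B, C are linearly ordered sets with strictly antitone unary operations g_A, g_B, g_C and i_A : C → A, i_B : C → B are order embeddings satisfying i_A ∘ g_C = g_A ∘ i_A and i_B ∘ g_C = g_B ∘ i_B, there exist a linearly ordered set D with a strictly antitone unary operation g_D and order embeddings j_A : A → D, j_B : B → D commuting with the operations, such that j_A ∘ i_A = j_B ∘ i_B. -/

import Mathlib

/-- A linearly ordered set equipped with one strict order reversing (strictly
antitone) unary operation. -/
structure LinOrderStrictAnti where
  carrier : Type
  [linOrd : LinearOrder carrier]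
  g : carrier → carrier
  santi : StrictAnti g

attribute [instance] LinOrderStrictAnti.linOrd

namespace AmalgLOSA

section Abstract

variable {X : Type} (G : Equiv.Perm X)

/-- `aX G x y n` represents `gⁿ x` for even `n` and `gⁿ y` for odd `n`. -/
def aX (x y : X) (n : ℤ) : X := (G ^ n) (if Even n then x else y)

lemma aX_zero (x y : X) : aX G x y 0 = x := by simp [aX]

lemma G_aX (x y : X) (n : ℤ) : G (aX G x y n) = aX G y x (n + 1) := by
  have h1 : (G ^ (n+1)) (if Even (n+1) then y else x)
      = G ((G ^ n) (if Even (n+1) then y else x)) := by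
    rw [show n + 1 = 1 + n by ring, zpow_one_add, Equiv.Perm.mul_apply]
  unfold aX
  rw [h1]
  congr 1
  by_cases h : Even n
  · simp [h, Int.even_add_one]
  · simp [h, Int.even_add_one]

/-- Good relation: preorder which is `G`-antitone in the iff sense. -/
structure GoodR (R : X → X → Prop) : Prop where
  refl : ∀ u, R u u
  trans : ∀ {u v w}, R u v → R v w → R u w
  flip : ∀ u v, R u v ↔ R (G v) (G u)

variable (R : X → X → Prop)

/-- The x-side link relation. -/
def U (x y : X) (n n' : ℤ) : Prop := R (aX G y x n) (aX G x y n')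

variable {G R}

lemma U_flip {x y : X} (hR : GoodR G R) {n n' : ℤ} :
    U G R x y n n' ↔ U G R x y (n' + 1) (n + 1) := by
  unfold U
  rw [hR.flip, G_aX, G_aX]

lemma U_shift2 {x y : X} (hR : GoodR G R) {n n' : ℤ} :
    U G R x y n n' ↔ U G R x y (n + 2) (n' + 2) := by
  rw [U_flip hR, U_flip hR]
  have h1 : n + 1 + 1 = n + 2 := by ring
  have h2 : n' + 1 + 1 = n' + 2 := by ring
  rw [h1, h2]

lemma U_shift {x y : X} (hR : GoodR G R) {n n' : ℤ} {t : ℤ} (ht : Even t) :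
    U G R x y n n' ↔ U G R x y (n + t) (n' + t) := by
  obtain ⟨s, rfl⟩ := ht
  induction s using Int.induction_on with
  | zero => simp
  | succ s ih =>
      have h1 : n + ((s:ℤ) + 1 + ((s:ℤ) + 1)) = n + ((s:ℤ) + (s:ℤ)) + 2 := by ring
      have h2 : n' + ((s:ℤ) + 1 + ((s:ℤ) + 1)) = n' + ((s:ℤ) + (s:ℤ)) + 2 := by ring
      rw [h1, h2, ← U_shift2 hR, ih]
  | pred s ih =>
      have h1 : n + (-(s:ℤ) - 1 + (-(s:ℤ) - 1)) + 2 = n + (-(s:ℤ) + -(s:ℤ)) := by ring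
      have h2 : n' + (-(s:ℤ) - 1 + (-(s:ℤ) - 1)) + 2 = n' + (-(s:ℤ) + -(s:ℤ)) := by ring
      rw [ih, ← h1, ← h2, ← U_shift2 hR]

/-- Badness of adding the pair `(x, y)` (i.e. `x ≤ y`) to `R`:
there is a cycle of links with the first one strict. -/
def xBadAt (G : Equiv.Perm X) (R : X → X → Prop) (x y : X) : Prop :=
  ∃ (k : ℕ) (n : ℕ → ℤ), 0 < k ∧ n k = n 0 ∧
    (∀ i < k, U G R x y (n i) (n (i + 1))) ∧
    ¬ U G R y x (n 1) (n 0)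

end Abstract



/-- Parity of an integer, as a Bool. -/
def par (z : ℤ) : Bool := decide (Even z)

lemma par_add_one (z : ℤ) : par (z + 1) = !par z := by
  by_cases h : Even z <;> simp [par, h, Int.even_add_one] <;> simpa using h

lemma par_eq_iff {a b : ℤ} : par a = par b ↔ Even (a - b) := by
  rw [Int.even_sub]
  by_cases ha : Even a <;> by_cases hb : Even b <;> simp [par, ha, hb]

/-- Vertices of the parity graph. -/
inductive GV : Type
  | av : Bool → GV
  | bv : Bool → GV
deriving DecidableEq

instance : Fintype GV :=
  ⟨⟨{GV.av false, GV.av true, GV.bv false, GV.bv true}, by decide⟩, by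
    intro x; cases x with
    | av b => cases b <;> decide
    | bv b => cases b <;> decide⟩

namespace Grand

variable (k l : ℕ) (n m : ℕ → ℤ)

/-- Edges of the parity graph: `inl (i, b)` is the `i`-th x-cycle edge
(flipped if `b`), `inr (j, b)` similarly for the y-cycle. -/
abbrev E : Type := (Fin k × Bool) ⊕ (Fin l × Bool)

def src : E k l → GV
  | .inl (i, false) => .bv (par (n i.val))
  | .inl (i, true) => .bv (!par (n (i.val + 1)))
  | .inr (j, false) => .av (par (m j.val))
  | .inr (j, true) => .av (!par (m (j.val + 1)))

def tgt : E k l → GV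
  | .inl (i, false) => .av (par (n (i.val + 1)))
  | .inl (i, true) => .av (!par (n i.val))
  | .inr (j, false) => .bv (par (m (j.val + 1)))
  | .inr (j, true) => .bv (!par (m j.val))

def gain : E k l → ℤ
  | .inl (i, false) => n (i.val + 1) - n i.val
  | .inl (i, true) => n i.val - n (i.val + 1)
  | .inr (j, false) => m (j.val + 1) - m j.val
  | .inr (j, true) => m j.val - m (j.val + 1)

def weight : E k l → ℕ
  | .inl _ => l
  | .inr _ => k

def rho : E k l → E k l
  | .inl (i, b) => .inl (i, !b)
  | .inr (j, b) => .inr (j, !b)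

def rhoV : GV → GV
  | .av p => .bv (!p)
  | .bv p => .av (!p)

variable {k l n m}

lemma src_rho (e : E k l) : src k l n m (rho k l e) = rhoV (tgt k l n m e) := by
  rcases e with ⟨i, _ | _⟩ | ⟨j, _ | _⟩ <;> simp [src, tgt, rho, rhoV]

lemma tgt_rho (e : E k l) : tgt k l n m (rho k l e) = rhoV (src k l n m e) := by
  rcases e with ⟨i, _ | _⟩ | ⟨j, _ | _⟩ <;> simp [src, tgt, rho, rhoV]

lemma gain_rho (e : E k l) : gain k l n m (rho k l e) = -gain k l n m e := by
  rcases e with ⟨i, _ | _⟩ | ⟨j, _ | _⟩ <;> simp [gain, rho]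

lemma rho_rho (e : E k l) : rho k l (rho k l e) = e := by
  rcases e with ⟨i, _ | _⟩ | ⟨j, _ | _⟩ <;> simp [rho]

def Step (k l : ℕ) (n m : ℕ → ℤ) (u v : GV) : Prop :=
  ∃ e : E k l, src k l n m e = u ∧ tgt k l n m e = v

def Reach (k l : ℕ) (n m : ℕ → ℤ) (u v : GV) : Prop :=
  Relation.ReflTransGen (Step k l n m) u v

section Counting

/-- Cyclic sum identity. -/
lemma cycSum {c : ℕ} {f : ℕ → ℤ} (hc : f c = f 0)
    (F : ℤ → ℕ) :
    ∑ i ∈ Finset.range c, F (f (i + 1)) = ∑ i ∈ Finset.range c, F (f i) := by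
  have h1 := Finset.sum_range_succ (fun i => F (f i)) c
  have h2 := Finset.sum_range_succ' (fun i => F (f i)) c
  rw [h1, hc] at h2
  exact (add_right_cancel h2).symm

lemma weight_pos (hk : 0 < k) (hl : 0 < l) (e : E k l) : 0 < weight k l e := by
  rcases e with ⟨i, b⟩ | ⟨j, b⟩ <;> simp [weight, hk, hl]

def outW (k l : ℕ) (n m : ℕ → ℤ) (v : GV) : ℕ :=
  ∑ e : E k l, if src k l n m e = v then weight k l e else 0
def inW (k l : ℕ) (n m : ℕ → ℤ) (v : GV) : ℕ :=
  ∑ e : E k l, if tgt k l n m e = v then weight k l e else 0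

lemma boolSplit (c : ℕ) (q p : Bool) :
    ((if q = p then c else 0) + (if (!q) = p then c else 0)) = c := by
  cases q <;> cases p <;> simp

lemma pairSumA {c' cc : ℕ} {f : ℕ → ℤ} (hc : f c' = f 0) (p : Bool) :
    (∑ x : Fin c', ((if par (f x.val) = p then cc else 0)
      + if (!par (f (x.val + 1))) = p then cc else 0)) = c' * cc := by
  rw [Finset.sum_add_distrib]
  rw [Fin.sum_univ_eq_sum_range (fun i => if par (f i) = p then cc else 0) c']
  rw [Fin.sum_univ_eq_sum_range (fun i => if (!par (f (i + 1))) = p then cc else 0) c']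
  rw [cycSum hc (fun z => if (!par z) = p then cc else 0)]
  rw [← Finset.sum_add_distrib]
  have : ∀ i, ((if par (f i) = p then cc else 0) + (if (!par (f i)) = p then cc else 0)) = cc :=
    fun i => boolSplit cc (par (f i)) p
  simp only [this, Finset.sum_const, Finset.card_range, smul_eq_mul]

lemma pairSumB {c' cc : ℕ} {f : ℕ → ℤ} (hc : f c' = f 0) (p : Bool) :
    (∑ x : Fin c', ((if (!par (f x.val)) = p then cc else 0)
      + if par (f (x.val + 1)) = p then cc else 0)) = c' * cc := by
  rw [Finset.sum_add_distrib]
  rw [Fin.sum_univ_eq_sum_range (fun i => if (!par (f i)) = p then cc else 0) c']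
  rw [Fin.sum_univ_eq_sum_range (fun i => if par (f (i + 1)) = p then cc else 0) c']
  rw [cycSum hc (fun z => if par z = p then cc else 0)]
  rw [← Finset.sum_add_distrib]
  have : ∀ i, ((if (!par (f i)) = p then cc else 0) + (if par (f i) = p then cc else 0)) = cc := by
    intro i
    rw [add_comm]
    exact boolSplit cc (par (f i)) p
  simp only [this, Finset.sum_const, Finset.card_range, smul_eq_mul]

lemma outW_eq (hnk : n k = n 0) (hml : m l = m 0) (v : GV) : outW k l n m v = k * l := by
  cases v with
  | av p =>
      unfold outW
      rw [Fintype.sum_sum_type]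
      simp only [Fintype.sum_prod_type, Fintype.sum_bool, src, weight]
      simp only [reduceCtorEq, if_false, Finset.sum_const_zero, zero_add, add_zero, GV.av.injEq,
        add_comm]
      rw [pairSumA hml p]
      exact Nat.mul_comm l k
  | bv p =>
      unfold outW
      rw [Fintype.sum_sum_type]
      simp only [Fintype.sum_prod_type, Fintype.sum_bool, src, weight]
      simp only [reduceCtorEq, if_false, Finset.sum_const_zero, zero_add, add_zero, GV.bv.injEq,
        add_comm]
      rw [pairSumA hnk p]

lemma inW_eq (hnk : n k = n 0) (hml : m l = m 0) (v : GV) : inW k l n m v = k * l := by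
  cases v with
  | av p =>
      unfold inW
      rw [Fintype.sum_sum_type]
      simp only [Fintype.sum_prod_type, Fintype.sum_bool, tgt, weight]
      simp only [reduceCtorEq, if_false, Finset.sum_const_zero, zero_add, add_zero, GV.av.injEq,
        add_comm]
      rw [pairSumB hnk p]
  | bv p =>
      unfold inW
      rw [Fintype.sum_sum_type]
      simp only [Fintype.sum_prod_type, Fintype.sum_bool, tgt, weight]
      simp only [reduceCtorEq, if_false, Finset.sum_const_zero, zero_add, add_zero, GV.bv.injEq,
        add_comm]
      rw [pairSumB hml p]
      exact Nat.mul_comm l k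

/-- key: any forward-closed set of vertices is backward closed. -/
lemma backward_closed (hk : 0 < k) (hl : 0 < l) (hnk : n k = n 0) (hml : m l = m 0)
    (S : Set GV)
    (hS : ∀ e : E k l, src k l n m e ∈ S → tgt k l n m e ∈ S) :
    ∀ e : E k l, tgt k l n m e ∈ S → src k l n m e ∈ S := by
  classical
  have key : ∀ (f : E k l → GV),
      (∑ e : E k l, if f e ∈ S then weight k l e else 0)
        = ∑ v : GV, if v ∈ S then (∑ e : E k l, if f e = v then weight k l e else 0) else 0 := by
    intro f
    have : ∀ e : E k l, (if f e ∈ S then weight k l e else 0)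
        = ∑ v : GV, if v = f e then (if v ∈ S then weight k l e else 0) else 0 := by
      intro e
      rw [Finset.sum_ite_eq' Finset.univ (f e) (fun v => if v ∈ S then weight k l e else 0)]
      simp
    rw [Finset.sum_congr rfl (fun e _ => this e), Finset.sum_comm]
    apply Finset.sum_congr rfl
    intro v _
    by_cases hv : v ∈ S
    · simp only [hv, if_true]
      apply Finset.sum_congr rfl
      intro e _
      by_cases h2 : v = f e <;> simp [h2, eq_comm]
    · simp [hv]
  have hFT : (∑ e : E k l, if src k l n m e ∈ S then weight k l e else 0)
      = (∑ e : E k l, if tgt k l n m e ∈ S then weight k l e else 0) := by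
    rw [key, key]
    apply Finset.sum_congr rfl
    intro v _
    have h1 : (∑ e : E k l, if src k l n m e = v then weight k l e else 0) = k * l :=
      outW_eq hnk hml v
    have h2 : (∑ e : E k l, if tgt k l n m e = v then weight k l e else 0) = k * l :=
      inW_eq hnk hml v
    rw [h1, h2]
  intro e hte
  by_contra hse
  have hlt : (∑ e : E k l, if src k l n m e ∈ S then weight k l e else 0)
      < (∑ e : E k l, if tgt k l n m e ∈ S then weight k l e else 0) := by
    apply Finset.sum_lt_sum
    · intro e' _
      by_cases h : src k l n m e' ∈ S
      · simp [h, hS e' h]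
      · simp [h]
    · refine ⟨e, Finset.mem_univ e, ?_⟩
      simp [hse, hte, weight_pos hk hl e]
  omega

end Counting

section Walks

lemma reach_step (e : E k l) : Reach k l n m (src k l n m e) (tgt k l n m e) :=
  Relation.ReflTransGen.single ⟨e, rfl, rfl⟩

lemma reach_back (hk : 0 < k) (hl : 0 < l) (hnk : n k = n 0) (hml : m l = m 0)
    (e : E k l) : Reach k l n m (tgt k l n m e) (src k l n m e) := by
  have hbc := backward_closed hk hl hnk hml
      {v | Reach k l n m (tgt k l n m e) v}
      (fun e' he' => Relation.ReflTransGen.tail he' ⟨e', rfl, rfl⟩)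
  exact hbc e Relation.ReflTransGen.refl

lemma reach_symm (hk : 0 < k) (hl : 0 < l) (hnk : n k = n 0) (hml : m l = m 0)
    {u v : GV} (h : Reach k l n m u v) :
    Reach k l n m v u := by
  induction h with
  | refl => exact Relation.ReflTransGen.refl
  | tail _ hstep ih =>
      obtain ⟨e, he1, he2⟩ := hstep
      refine Relation.ReflTransGen.trans ?_ ih
      rw [← he1, ← he2]
      exact reach_back hk hl hnk hml e

lemma reach_dual {u v : GV} (h : Reach k l n m u v) :
    Reach k l n m (rhoV v) (rhoV u) := by
  induction h with
  | refl => exact Relation.ReflTransGen.refl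
  | tail _ hstep ih =>
      obtain ⟨e, he1, he2⟩ := hstep
      refine Relation.ReflTransGen.trans ?_ ih
      refine Relation.ReflTransGen.single ⟨rho k l e, ?_, ?_⟩
      · rw [src_rho, he2]
      · rw [tgt_rho, he1]

end Walks

/-- Walk specification: `WSpec L u v` iff `L` is an edge path from `u` to `v`. -/
def WSpec (k l : ℕ) (n m : ℕ → ℤ) : List (E k l) → GV → GV → Prop
  | [], u, v => u = v
  | e :: L, u, v => src k l n m e = u ∧ WSpec k l n m L (tgt k l n m e) v

def gsum (k l : ℕ) (n m : ℕ → ℤ) (L : List (E k l)) : ℤ := (L.map (gain k l n m)).sum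

section WalkLemmas

lemma wspec_append {L1 L2 : List (E k l)} {u v : GV} :
    WSpec k l n m (L1 ++ L2) u v ↔
      ∃ w, WSpec k l n m L1 u w ∧ WSpec k l n m L2 w v := by
  induction L1 generalizing u with
  | nil =>
      constructor
      · intro h; exact ⟨u, rfl, h⟩
      · rintro ⟨w, hw, h⟩
        have : u = w := hw
        rw [this]; exact h
  | cons e L ih =>
      constructor
      · rintro ⟨h1, h2⟩
        obtain ⟨w, hw1, hw2⟩ := ih.mp h2
        exact ⟨w, ⟨h1, hw1⟩, hw2⟩
      · rintro ⟨w, ⟨h1, h2⟩, h3⟩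
        exact ⟨h1, ih.mpr ⟨w, h2, h3⟩⟩

lemma gsum_append (L1 L2 : List (E k l)) :
    gsum k l n m (L1 ++ L2) = gsum k l n m L1 + gsum k l n m L2 := by
  simp [gsum]

lemma reach_wspec {u v : GV} (h : Reach k l n m u v) :
    ∃ L, WSpec k l n m L u v := by
  induction h with
  | refl => exact ⟨[], rfl⟩
  | tail _ hstep ih =>
      obtain ⟨L, hL⟩ := ih
      obtain ⟨e, he1, he2⟩ := hstep
      refine ⟨L ++ [e], ?_⟩
      rw [wspec_append]
      exact ⟨_, hL, by exact ⟨he1, he2⟩⟩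

lemma wspec_rho {L : List (E k l)} {u v : GV} (h : WSpec k l n m L u v) :
    WSpec k l n m (L.reverse.map (rho k l)) (rhoV v) (rhoV u) := by
  induction L generalizing u with
  | nil => cases h; rfl
  | cons e L ih =>
      obtain ⟨h1, h2⟩ := h
      simp only [List.reverse_cons, List.map_append, List.map_cons, List.map_nil]
      rw [wspec_append]
      refine ⟨rhoV (tgt k l n m e), ih h2, ?_⟩
      refine ⟨?_, ?_⟩
      · rw [src_rho]
      · rw [tgt_rho, h1]; rfl

lemma gsum_rho (L : List (E k l)) :
    gsum k l n m (L.reverse.map (rho k l)) = -gsum k l n m L := by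
  induction L with
  | nil => simp [gsum]
  | cons e L ih =>
      simp only [List.reverse_cons, List.map_append, List.map_cons, List.map_nil]
      rw [gsum_append, ih]
      simp [gsum, gain_rho]

/-- Rotation of a closed walk to start at a designated edge. -/
lemma wspec_rotate {L1 L2 : List (E k l)} {e : E k l} {u : GV}
    (h : WSpec k l n m (L1 ++ e :: L2) u u) :
    WSpec k l n m (e :: (L2 ++ L1)) (src k l n m e) (src k l n m e)
      ∧ gsum k l n m (e :: (L2 ++ L1)) = gsum k l n m (L1 ++ e :: L2) := by
  rw [wspec_append] at h
  obtain ⟨w, h1, h2, h3⟩ := h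
  constructor
  · refine ⟨rfl, ?_⟩
    rw [wspec_append]
    refine ⟨u, h3, ?_⟩
    rw [h2]; exact h1
  · show gain k l n m e + gsum k l n m (L2 ++ L1) = _
    rw [gsum_append, gsum_append]
    show _ = gsum k l n m L1 + gsum k l n m (e :: L2)
    show _ = gsum k l n m L1 + (gain k l n m e + gsum k l n m L2)
    ring

end WalkLemmas

end Grand


namespace Grand

section Main

variable {X : Type} {G : Equiv.Perm X} {R : X → X → Prop} {x y : X}
variable {k l : ℕ} {n m : ℕ → ℤ}

def velem (G : Equiv.Perm X) (x y : X) : GV → ℤ → X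
  | .av _, q => aX G x y q
  | .bv _, q => aX G y x q

def vpar : GV → Bool
  | .av p => p
  | .bv p => p

lemma edge_valid (hR : GoodR G R)
    (hUl : ∀ i < k, U G R x y (n i) (n (i + 1)))
    (hWl : ∀ j < l, U G R y x (m j) (m (j + 1)))
    (e : E k l) (q : ℤ) (hq : par q = vpar (src k l n m e)) :
    R (velem G x y (src k l n m e) q)
      (velem G x y (tgt k l n m e) (q + gain k l n m e))
    ∧ par (q + gain k l n m e) = vpar (tgt k l n m e) := by
  rcases e with ⟨i, b⟩ | ⟨j, b⟩ <;> cases b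
  · -- x-edge, forward
    simp only [src, tgt, gain, vpar, velem] at hq ⊢
    have hev : Even (q - n i.val) := par_eq_iff.mp hq
    have base := hUl i.val i.isLt
    have h1 := (U_shift hR (t := q - n i.val) hev).mp base
    have e1 : n i.val + (q - n i.val) = q := by ring
    have e2 : n (i.val + 1) + (q - n i.val) = q + (n (i.val + 1) - n i.val) := by ring
    rw [e1, e2] at h1
    refine ⟨h1, ?_⟩
    rw [par_eq_iff]
    have : q + (n (i.val + 1) - n i.val) - n (i.val + 1) = q - n i.val := by ring
    rw [this]; exact hev
  · -- x-edge, flipped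
    simp only [src, tgt, gain, vpar, velem] at hq ⊢
    have hq' : par q = par (n (i.val + 1) + 1) := by rw [par_add_one]; exact hq
    have hev : Even (q - (n (i.val + 1) + 1)) := par_eq_iff.mp hq'
    have base := hUl i.val i.isLt
    have h0 := (U_flip hR).mp base
    have h1 := (U_shift hR (t := q - (n (i.val + 1) + 1)) hev).mp h0
    have e1 : n (i.val + 1) + 1 + (q - (n (i.val + 1) + 1)) = q := by ring
    have e2 : n i.val + 1 + (q - (n (i.val + 1) + 1))
        = q + (n i.val - n (i.val + 1)) := by ring
    rw [e1, e2] at h1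
    refine ⟨h1, ?_⟩
    have : par (n i.val + 1) = !par (n i.val) := par_add_one _
    rw [← this, par_eq_iff]
    have h3 : q + (n i.val - n (i.val + 1)) - (n i.val + 1) = q - (n (i.val + 1) + 1) := by ring
    rw [h3]; exact hev
  · -- y-edge, forward
    simp only [src, tgt, gain, vpar, velem] at hq ⊢
    have hev : Even (q - m j.val) := par_eq_iff.mp hq
    have base := hWl j.val j.isLt
    have h1 := (U_shift hR (t := q - m j.val) hev).mp base
    have e1 : m j.val + (q - m j.val) = q := by ring
    have e2 : m (j.val + 1) + (q - m j.val) = q + (m (j.val + 1) - m j.val) := by ring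
    rw [e1, e2] at h1
    refine ⟨h1, ?_⟩
    rw [par_eq_iff]
    have : q + (m (j.val + 1) - m j.val) - m (j.val + 1) = q - m j.val := by ring
    rw [this]; exact hev
  · -- y-edge, flipped
    simp only [src, tgt, gain, vpar, velem] at hq ⊢
    have hq' : par q = par (m (j.val + 1) + 1) := by rw [par_add_one]; exact hq
    have hev : Even (q - (m (j.val + 1) + 1)) := par_eq_iff.mp hq'
    have base := hWl j.val j.isLt
    have h0 := (U_flip hR).mp base
    have h1 := (U_shift hR (t := q - (m (j.val + 1) + 1)) hev).mp h0
    have e1 : m (j.val + 1) + 1 + (q - (m (j.val + 1) + 1)) = q := by ring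
    have e2 : m j.val + 1 + (q - (m (j.val + 1) + 1))
        = q + (m j.val - m (j.val + 1)) := by ring
    rw [e1, e2] at h1
    refine ⟨h1, ?_⟩
    have : par (m j.val + 1) = !par (m j.val) := par_add_one _
    rw [← this, par_eq_iff]
    have h3 : q + (m j.val - m (j.val + 1)) - (m j.val + 1) = q - (m (j.val + 1) + 1) := by ring
    rw [h3]; exact hev

lemma wspec_R (hR : GoodR G R)
    (hUl : ∀ i < k, U G R x y (n i) (n (i + 1)))
    (hWl : ∀ j < l, U G R y x (m j) (m (j + 1))) :
    ∀ (L : List (E k l)) (u v : GV) (q : ℤ), WSpec k l n m L u v → par q = vpar u →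
      R (velem G x y u q) (velem G x y v (q + gsum k l n m L)) := by
  intro L
  induction L with
  | nil =>
      intro u v q h hq
      have : u = v := h
      subst this
      have : q + gsum k l n m [] = q := by simp [gsum]
      rw [this]
      exact hR.refl _
  | cons e L ih =>
      intro u v q h hq
      obtain ⟨h1, h2⟩ := h
      subst h1
      obtain ⟨hstep, hpar⟩ := edge_valid hR hUl hWl e q hq
      have hrest := ih (tgt k l n m e) v (q + gain k l n m e) h2 hpar
      have : q + gain k l n m e + gsum k l n m L = q + gsum k l n m (e :: L) := by
        simp [gsum]; ring
      rw [this] at hrest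
      exact hR.trans hstep hrest

lemma listsum_eq (N : ℕ) (f : ℕ → ℤ) :
    ((List.range N).map f).sum = ∑ i ∈ Finset.range N, f i := by
  induction N with
  | zero => simp
  | succ N ih =>
      rw [List.range_succ, Finset.sum_range_succ, List.map_append, List.sum_append, ih]
      simp

lemma modsum (N c : ℕ) (f : ℕ → ℤ) :
    ∑ t ∈ Finset.range (N * c), f (t % c) = (N : ℤ) * ∑ i ∈ Finset.range c, f i := by
  induction N with
  | zero => simp
  | succ N ih =>
      have h1 : (N + 1) * c = N * c + c := by ring
      have hsplit : ∑ t ∈ Finset.range (N * c + c), f (t % c)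
          = (∑ t ∈ Finset.range (N * c), f (t % c))
            + ∑ t ∈ Finset.Ico (N * c) (N * c + c), f (t % c) := by
        rw [Finset.range_eq_Ico, Finset.range_eq_Ico,
          Finset.sum_Ico_consecutive _ (Nat.zero_le (N * c)) (Nat.le_add_right (N * c) c)]
      have e2 : ∑ t ∈ Finset.Ico (N * c) (N * c + c), f (t % c)
          = ∑ i ∈ Finset.range c, f i := by
        rw [Finset.sum_Ico_eq_sum_range]
        simp only [Nat.add_sub_cancel_left]
        apply Finset.sum_congr rfl
        intro i hi
        have hic : i < c := Finset.mem_range.mp hi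
        have h2 : (N * c + i) % c = i := by
          rw [add_comm, Nat.mul_comm, Nat.add_mul_mod_self_left]
          exact Nat.mod_eq_of_lt hic
        rw [h2]
      rw [h1, hsplit, e2, ih]
      push_cast
      ring

lemma wspec_bind (P : Bool) (c1 c2 : ℕ → E k l)
    (h1 : ∀ t, src k l n m (c1 t) = .bv P ∧ tgt k l n m (c1 t) = .av P)
    (h2 : ∀ t, src k l n m (c2 t) = .av P ∧ tgt k l n m (c2 t) = .bv P) :
    ∀ T : List ℕ, WSpec k l n m (T.flatMap fun t => [c1 t, c2 t]) (.bv P) (.bv P) := by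
  intro T
  induction T with
  | nil => rfl
  | cons t T ih =>
      rw [List.flatMap_cons]
      show WSpec k l n m (c1 t :: c2 t :: (T.flatMap fun t => [c1 t, c2 t])) _ _
      refine ⟨(h1 t).1, ?_, ?_⟩
      · rw [(h2 t).1, (h1 t).2]
      · rw [(h2 t).2]; exact ih

lemma gsum_bind (c1 c2 : ℕ → E k l) (T : List ℕ) :
    gsum k l n m (T.flatMap fun t => [c1 t, c2 t])
      = (T.map fun t => gain k l n m (c1 t) + gain k l n m (c2 t)).sum := by
  induction T with
  | nil => rfl
  | cons t T ih =>
      rw [List.flatMap_cons, List.map_cons, List.sum_cons, ← ih]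
      show gsum k l n m (c1 t :: c2 t :: _) = _
      simp [gsum]
      ring

theorem grand (hR : GoodR G R)
    (hk : 0 < k) (hl : 0 < l) (hnk : n k = n 0) (hml : m l = m 0)
    (hUl : ∀ i < k, U G R x y (n i) (n (i + 1)))
    (hWl : ∀ j < l, U G R y x (m j) (m (j + 1)))
    (hSU : ¬ U G R y x (n 1) (n 0)) : False := by
  classical
  set P : Bool := par (n 0) with hP
  set estar : E k l := Sum.inl (⟨0, hk⟩, false) with hestar
  have hsrc : src k l n m estar = .bv P := rfl
  have htgt : tgt k l n m estar = .av (par (n 1)) := rfl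
  have hgain : gain k l n m estar = n 1 - n 0 := rfl
  suffices hfin : ∃ REST, WSpec k l n m (estar :: REST) (.bv P) (.bv P)
      ∧ gsum k l n m (estar :: REST) = 0 by
    obtain ⟨REST, hspec, hg⟩ := hfin
    obtain ⟨hs0, hs1⟩ := hspec
    have hq : par (n 1) = vpar (tgt k l n m estar) := by rw [htgt]; rfl
    have hlift := wspec_R hR hUl hWl REST (tgt k l n m estar) (.bv P) (n 1) hs1 hq
    rw [htgt] at hlift
    have hgr : gsum k l n m REST = -(n 1 - n 0) := by
      have h5 : gsum k l n m (estar :: REST)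
          = gain k l n m estar + gsum k l n m REST := by simp [gsum]
      rw [hg, hgain] at h5
      linarith
    rw [hgr] at hlift
    have h6 : n 1 + -(n 1 - n 0) = n 0 := by ring
    rw [h6] at hlift
    exact hSU hlift
  by_cases hA : Reach k l n m (.bv P) (.av (!P))
  · -- Case A
    have hQstep : Reach k l n m (.bv P) (.av (par (n 1))) := by
      rw [← hsrc, ← htgt]
      exact reach_step estar
    have r1 : Reach k l n m (.av (par (n 1))) (.bv P) := reach_symm hk hl hnk hml hQstep
    have r2 : Reach k l n m (.av (par (n 1))) (.av (!P)) := r1.trans hA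
    have r3 : Reach k l n m (.bv (!par (n 1))) (.av (!P)) := by
      have h := reach_dual hQstep
      simpa [rhoV] using h
    have r3' : Reach k l n m (.av (!P)) (.bv (!par (n 1))) := reach_symm hk hl hnk hml r3
    have rA : Reach k l n m (.av (par (n 1))) (.bv (!par (n 1))) := r2.trans r3'
    have r4 : Reach k l n m (.av (!P)) (.bv P) := reach_symm hk hl hnk hml hA
    obtain ⟨L1, hL1⟩ := reach_wspec rA
    obtain ⟨L2, hL2⟩ := reach_wspec r4
    have hw1spec : WSpec k l n m (estar :: (L1 ++ rho k l estar :: L2)) (.bv P) (.bv P) := by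
      refine ⟨hsrc, ?_⟩
      rw [htgt, wspec_append]
      refine ⟨.bv (!par (n 1)), hL1, ?_, ?_⟩
      · rw [src_rho, htgt]; rfl
      · rw [tgt_rho, hsrc]
        exact hL2
    have hw2spec := wspec_rho hw1spec
    have hmem1 : rho k l estar ∈ (estar :: (L1 ++ rho k l estar :: L2)) := by
      simp
    have hmem2 : estar ∈ ((estar :: (L1 ++ rho k l estar :: L2)).reverse.map (rho k l)) := by
      rw [List.mem_map]
      exact ⟨rho k l estar, by rw [List.mem_reverse]; exact hmem1, rho_rho estar⟩
    obtain ⟨l1, l2, hsplit⟩ := List.append_of_mem hmem2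
    rw [hsplit] at hw2spec
    have hrot := wspec_rotate hw2spec
    refine ⟨(L1 ++ rho k l estar :: L2) ++ (estar :: (l2 ++ l1)), ?_, ?_⟩
    · show WSpec k l n m ((estar :: (L1 ++ rho k l estar :: L2)) ++ (estar :: (l2 ++ l1))) _ _
      rw [wspec_append]
      refine ⟨.bv P, hw1spec, ?_⟩
      rw [← hsrc]
      exact hrot.1
    · show gsum k l n m ((estar :: (L1 ++ rho k l estar :: L2)) ++ (estar :: (l2 ++ l1))) = 0
      rw [gsum_append, hrot.2, ← hsplit, gsum_rho]
      ring
  · -- Case B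
    have compFwd : ∀ e : E k l, Reach k l n m (.bv P) (src k l n m e) →
        Reach k l n m (.bv P) (tgt k l n m e) :=
      fun e h => h.tail ⟨e, rfl, rfl⟩
    have compBack : ∀ e : E k l, Reach k l n m (.bv P) (tgt k l n m e) →
        Reach k l n m (.bv P) (src k l n m e) :=
      backward_closed hk hl hnk hml {v | Reach k l n m (.bv P) v} (fun e he => compFwd e he)
    have noCrossSrc : ∀ e : E k l, tgt k l n m e = rhoV (src k l n m e) →
        ¬ Reach k l n m (.bv P) (src k l n m e) := by
      intro e hcr hc
      have h2 : Reach k l n m (.bv P) (tgt k l n m e) := compFwd e hc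
      have hd : Reach k l n m (rhoV (src k l n m e)) (rhoV (.bv P)) := reach_dual hc
      rw [hcr] at h2
      exact hA (h2.trans hd)
    have noCrossTgt : ∀ e : E k l, tgt k l n m e = rhoV (src k l n m e) →
        ¬ Reach k l n m (.bv P) (tgt k l n m e) :=
      fun e hcr hc => noCrossSrc e hcr (compBack e hc)
    have bool_ne : ∀ {a b : Bool}, a ≠ b → a = !b := by decide
    have hnpar : ∀ i, i ≤ k → par (n i) = P := by
      intro i
      induction i with
      | zero => intro _; rfl
      | succ i ih =>
          intro hik
          have hi : i < k := hik
          have hpi : par (n i) = P := ih (le_of_lt hi)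
          by_contra hne
          have hcross : tgt k l n m (Sum.inl (⟨i, hi⟩, false))
              = rhoV (src k l n m (Sum.inl (⟨i, hi⟩, false))) := by
            show GV.av (par (n (i + 1))) = rhoV (.bv (par (n i)))
            show GV.av (par (n (i + 1))) = GV.av (!par (n i))
            rw [hpi, bool_ne hne]
          refine noCrossSrc _ hcross ?_
          show Reach k l n m (.bv P) (.bv (par (n i)))
          rw [hpi]
          exact Relation.ReflTransGen.refl
    have havP : Reach k l n m (.bv P) (.av P) := by
      have h := compFwd estar (by rw [hsrc]; exact Relation.ReflTransGen.refl)
      rw [htgt, hnpar 1 hk] at h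
      exact h
    have hmpar : ∀ j, j ≤ l → par (m j) = par (m 0) := by
      intro j
      induction j with
      | zero => intro _; rfl
      | succ j ih =>
          intro hjl
          have hj : j < l := hjl
          have hpj : par (m j) = par (m 0) := ih (le_of_lt hj)
          by_contra hne
          have hcross : tgt k l n m (Sum.inr (⟨j, hj⟩, false))
              = rhoV (src k l n m (Sum.inr (⟨j, hj⟩, false))) := by
            show GV.bv (par (m (j + 1))) = rhoV (.av (par (m j)))
            show GV.bv (par (m (j + 1))) = GV.bv (!par (m j))
            have : par (m (j + 1)) ≠ par (m j) := by rw [hpj]; exact hne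
            rw [bool_ne this]
          by_cases hc : par (m j) = P
          · refine noCrossSrc _ hcross ?_
            show Reach k l n m (.bv P) (.av (par (m j)))
            rw [hc]
            exact havP
          · refine noCrossTgt _ hcross ?_
            show Reach k l n m (.bv P) (.bv (par (m (j + 1))))
            have h1 : par (m (j + 1)) = !par (m j) := by
              have : par (m (j + 1)) ≠ par (m j) := by rw [hpj]; exact hne
              exact bool_ne this
            rw [h1, bool_ne hc]
            simp only [Bool.not_not]
            exact Relation.ReflTransGen.refl
    -- choose the filler orientation
    obtain ⟨fb, hfb1, hfb2⟩ : ∃ fb : Bool,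
        (∀ jj : Fin l, src k l n m (Sum.inr (jj, fb)) = .av P
          ∧ tgt k l n m (Sum.inr (jj, fb)) = .bv P)
        ∧ (∑ i ∈ Finset.range l,
            (fun j => gain k l n m (Sum.inr (⟨j % l, Nat.mod_lt j hl⟩, fb))) i) = 0 := by
      by_cases hPm : par (m 0) = P
      · refine ⟨false, fun jj => ⟨?_, ?_⟩, ?_⟩
        · show GV.av (par (m jj.val)) = _
          rw [hmpar jj.val (le_of_lt jj.isLt), hPm]
        · show GV.bv (par (m (jj.val + 1))) = _
          rw [hmpar (jj.val + 1) jj.isLt, hPm]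
        · have : ∀ i ∈ Finset.range l,
              gain k l n m (Sum.inr (⟨i % l, Nat.mod_lt i hl⟩, false))
                = m (i + 1) - m i := by
            intro i hi
            have : i % l = i := Nat.mod_eq_of_lt (Finset.mem_range.mp hi)
            show m (i % l + 1) - m (i % l) = _
            rw [this]
          rw [Finset.sum_congr rfl this, Finset.sum_range_sub, hml, sub_self]
      · have hPm' : par (m 0) = !P := bool_ne hPm
        refine ⟨true, fun jj => ⟨?_, ?_⟩, ?_⟩
        · show GV.av (!par (m (jj.val + 1))) = _
          rw [hmpar (jj.val + 1) jj.isLt, hPm']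
          simp only [Bool.not_not]
        · show GV.bv (!par (m jj.val)) = _
          rw [hmpar jj.val (le_of_lt jj.isLt), hPm']
          simp only [Bool.not_not]
        · have : ∀ i ∈ Finset.range l,
              gain k l n m (Sum.inr (⟨i % l, Nat.mod_lt i hl⟩, true))
                = m i - m (i + 1) := by
            intro i hi
            have : i % l = i := Nat.mod_eq_of_lt (Finset.mem_range.mp hi)
            show m (i % l) - m (i % l + 1) = _
            rw [this]
          rw [Finset.sum_congr rfl this, Finset.sum_range_sub', hml, sub_self]
    have hc1 : ∀ t : ℕ, src k l n m (Sum.inl (⟨t % k, Nat.mod_lt t hk⟩, false)) = .bv P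
        ∧ tgt k l n m (Sum.inl (⟨t % k, Nat.mod_lt t hk⟩, false)) = .av P := by
      intro t
      constructor
      · show GV.bv (par (n (t % k))) = _
        rw [hnpar (t % k) (le_of_lt (Nat.mod_lt t hk))]
      · show GV.av (par (n (t % k + 1))) = _
        rw [hnpar (t % k + 1) (Nat.mod_lt t hk)]
    have hws := wspec_bind P
      (fun t => Sum.inl (⟨t % k, Nat.mod_lt t hk⟩, false))
      (fun t => Sum.inr (⟨t % l, Nat.mod_lt t hl⟩, fb))
      hc1 (fun t => hfb1 _) (List.range (l * k))
    have hlk : 0 < l * k := Nat.mul_pos hl hk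
    obtain ⟨N, hN⟩ : ∃ N, l * k = N + 1 := ⟨l * k - 1, by omega⟩
    have hrange : List.range (l * k) = 0 :: (List.range N).map Nat.succ := by
      rw [hN, List.range_succ_eq_map]
    have hc10 : (Sum.inl (⟨0 % k, Nat.mod_lt 0 hk⟩, false) : E k l) = estar := by
      rw [hestar]
      have : (⟨0 % k, Nat.mod_lt 0 hk⟩ : Fin k) = ⟨0, hk⟩ := Fin.ext (Nat.zero_mod k)
      rw [this]
    have hwalk : ((List.range (l * k)).flatMap fun t =>
          [(Sum.inl (⟨t % k, Nat.mod_lt t hk⟩, false) : E k l),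
           Sum.inr (⟨t % l, Nat.mod_lt t hl⟩, fb)])
        = estar :: (Sum.inr (⟨0 % l, Nat.mod_lt 0 hl⟩, fb) ::
            (((List.range N).map Nat.succ).flatMap fun t =>
              [(Sum.inl (⟨t % k, Nat.mod_lt t hk⟩, false) : E k l),
               Sum.inr (⟨t % l, Nat.mod_lt t hl⟩, fb)])) := by
      rw [hrange, List.flatMap_cons, hc10]
      rfl
    refine ⟨(Sum.inr (⟨0 % l, Nat.mod_lt 0 hl⟩, fb) ::
            (((List.range N).map Nat.succ).flatMap fun t =>
              [(Sum.inl (⟨t % k, Nat.mod_lt t hk⟩, false) : E k l),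
               Sum.inr (⟨t % l, Nat.mod_lt t hl⟩, fb)])), ?_, ?_⟩
    · rw [← hwalk]
      exact hws
    · rw [← hwalk]
      rw [gsum_bind]
      rw [listsum_eq (l * k) _]
      rw [Finset.sum_add_distrib]
      have hsum1 : (∑ t ∈ Finset.range (l * k),
          gain k l n m (Sum.inl (⟨t % k, Nat.mod_lt t hk⟩, false))) = 0 := by
        have heq : ∀ t ∈ Finset.range (l * k),
            gain k l n m (Sum.inl ((⟨t % k, Nat.mod_lt t hk⟩ : Fin k), false))
              = (fun i => n (i + 1) - n i) (t % k) := fun t _ => rfl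
        rw [Finset.sum_congr rfl heq, modsum l k (fun i => n (i + 1) - n i),
          Finset.sum_range_sub, hnk, sub_self, mul_zero]
      have hsum2 : (∑ t ∈ Finset.range (l * k),
          gain k l n m (Sum.inr (⟨t % l, Nat.mod_lt t hl⟩, fb))) = 0 := by
        have hcomm : l * k = k * l := Nat.mul_comm l k
        have heq : ∀ t ∈ Finset.range (l * k),
            gain k l n m (Sum.inr ((⟨t % l, Nat.mod_lt t hl⟩ : Fin l), fb))
              = (fun j => gain k l n m (Sum.inr (⟨j % l, Nat.mod_lt j hl⟩, fb))) (t % l) := by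
          intro t _
          have hmm : t % l % l = t % l := Nat.mod_eq_of_lt (Nat.mod_lt t hl)
          rcases fb with _ | _
          · show m (t % l + 1) - m (t % l) = m (t % l % l + 1) - m (t % l % l)
            rw [hmm]
          · show m (t % l) - m (t % l + 1) = m (t % l % l) - m (t % l % l + 1)
            rw [hmm]
        rw [Finset.sum_congr rfl heq, hcomm,
          modsum k l (fun j => gain k l n m (Sum.inr (⟨j % l, Nat.mod_lt j hl⟩, fb))),
          hfb2, mul_zero]
      rw [hsum1, hsum2, add_zero]

end Main

end Grand

section Zorn

variable {X : Type} {G : Equiv.Perm X} {Base : X → X → Prop}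

/-- Strict part of the base relation. -/
def Strict0 (Base : X → X → Prop) (u v : X) : Prop := Base u v ∧ ¬ Base v u

/-- A good relation relative to the base. -/
structure Good (G : Equiv.Perm X) (Base : X → X → Prop) (R : X → X → Prop) : Prop where
  toGoodR : GoodR G R
  base : ∀ u v, Base u v → R u v
  nc : ∀ u v, Strict0 Base u v → ¬ R v u

variable {R : X → X → Prop} {x y : X}

/-- One-step closure adding the pair `(x, y)` with all its consequences. -/
def Cx (G : Equiv.Perm X) (R : X → X → Prop) (x y : X) : X → X → Prop :=
  Relation.TransGen (fun u v => R u v ∨ ∃ nn : ℤ, u = aX G x y nn ∧ v = aX G y x nn)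

lemma cx_incl (h : R u v) : Cx G R x y u v := Relation.TransGen.single (Or.inl h)

lemma cx_pair (nn : ℤ) : Cx G R x y (aX G x y nn) (aX G y x nn) :=
  Relation.TransGen.single (Or.inr ⟨nn, rfl, rfl⟩)

lemma cx_flip (hR : GoodR G R) {u v : X} (h : Cx G R x y u v) :
    Cx G R x y (G v) (G u) := by
  induction h with
  | single hs =>
      rcases hs with hs | ⟨nn, rfl, rfl⟩
      · exact cx_incl ((hR.flip _ _).mp hs)
      · rw [G_aX, G_aX]
        exact cx_pair (nn + 1)
  | tail _ hstep ih =>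
      rename_i b c _
      refine Relation.TransGen.trans ?_ ih
      rcases hstep with hs | ⟨nn, rfl, rfl⟩
      · exact cx_incl ((hR.flip _ _).mp hs)
      · rw [G_aX, G_aX]
        exact cx_pair (nn + 1)

lemma cx_unflip (hR : GoodR G R) {u v : X} (h : Cx G R x y (G v) (G u)) :
    Cx G R x y u v := by
  have key : ∀ {a b : X}, Cx G R x y a b → Cx G R x y (G.symm b) (G.symm a) := by
    intro a b hab
    induction hab with
    | single hs =>
        rcases hs with hs | ⟨nn, rfl, rfl⟩
        · refine cx_incl ((hR.flip _ _).mpr ?_)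
          simpa using hs
        · have h1 : G.symm (aX G y x nn) = aX G x y (nn - 1) := by
            apply G.injective
            simp [G_aX, sub_add_cancel]
          have h2 : G.symm (aX G x y nn) = aX G y x (nn - 1) := by
            apply G.injective
            simp [G_aX, sub_add_cancel]
          rw [h1, h2]
          exact cx_pair (nn - 1)
    | tail _ hstep ih =>
        refine Relation.TransGen.trans ?_ ih
        rcases hstep with hs | ⟨nn, rfl, rfl⟩
        · refine cx_incl ((hR.flip _ _).mpr ?_)
          simpa using hs
        · have h1 : G.symm (aX G y x nn) = aX G x y (nn - 1) := by
            apply G.injective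
            simp [G_aX, sub_add_cancel]
          have h2 : G.symm (aX G x y nn) = aX G y x (nn - 1) := by
            apply G.injective
            simp [G_aX, sub_add_cancel]
          rw [h1, h2]
          exact cx_pair (nn - 1)
  have := key h
  simpa using this

/-- Chains of x-links through a list of pair levels. -/
def Chn (G : Equiv.Perm X) (R : X → X → Prop) (x y : X) : ℤ → List ℤ → ℤ → Prop
  | c, [], d => c = d
  | c, e :: L, d => U G R x y c e ∧ Chn G R x y e L d

lemma chn_last {c d : ℤ} : ∀ {L : List ℤ}, Chn G R x y c L d →
    (c :: L).getD L.length 0 = d := by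
  intro L
  induction L generalizing c with
  | nil => intro h; exact h
  | cons e L ih => intro h; exact ih h.2

lemma chn_links {c d : ℤ} : ∀ {L : List ℤ}, Chn G R x y c L d →
    ∀ j < L.length, U G R x y ((c :: L).getD j 0) ((c :: L).getD (j + 1) 0) := by
  intro L
  induction L generalizing c with
  | nil => intro _ j hj; simp at hj
  | cons e L ih =>
      intro h j hj
      match j with
      | 0 => exact h.1
      | j + 1 => exact ih h.2 j (by simpa using hj)

/-- From a closed chain we construct badness data. -/
lemma mk_bad {c d : ℤ} {L : List ℤ} (hchn : Chn G R x y c L d)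
    (hU : U G R x y d c) (hS : ¬ U G R y x c d) : xBadAt G R x y := by
  refine ⟨L.length + 1, fun i => (d :: c :: L).getD i 0, Nat.succ_pos _, ?_, ?_, ?_⟩
  · show (d :: c :: L).getD (L.length + 1) 0 = d
    show (c :: L).getD L.length 0 = d
    exact chn_last hchn
  · intro i hi
    match i with
    | 0 => exact hU
    | i + 1 =>
        have hi' : i < L.length := by omega
        exact chn_links hchn i hi'
  · exact hS

lemma chn_append {c d nn : ℤ} {L : List ℤ} (h2 : Chn G R x y c L d)
    (hU : U G R x y d nn) : Chn G R x y c (L ++ [nn]) nn := by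
  induction L generalizing c with
  | nil =>
      have : c = d := h2
      subst this
      exact ⟨hU, rfl⟩
  | cons e L ihL => exact ⟨h2.1, ihL h2.2⟩

/-- Decomposition of the closure. -/
lemma cx_decomp (hR : GoodR G R) {a b : X} (h : Cx G R x y a b) :
    R a b ∨ ∃ c L d, R a (aX G x y c) ∧ Chn G R x y c L d ∧ R (aX G y x d) b := by
  induction h with
  | single hs =>
      rcases hs with hs | ⟨nn, rfl, rfl⟩
      · exact Or.inl hs
      · exact Or.inr ⟨nn, [], nn, hR.refl _, rfl, hR.refl _⟩
  | tail _ hstep ih =>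
      rename_i b' b _
      rcases hstep with hs | ⟨nn, rfl, rfl⟩
      · rcases ih with h1 | ⟨c, L, d, h1, h2, h3⟩
        · exact Or.inl (hR.trans h1 hs)
        · exact Or.inr ⟨c, L, d, h1, h2, hR.trans h3 hs⟩
      · rcases ih with h1 | ⟨c, L, d, h1, h2, h3⟩
        · exact Or.inr ⟨nn, [], nn, h1, rfl, hR.refl _⟩
        · exact Or.inr ⟨c, L ++ [nn], nn, h1, chn_append h2 h3, hR.refl _⟩

/-- The extension lemma: if adding `(x,y)` is not bad then the closure is good. -/
lemma cx_good (hG : Good G Base R) (hbad : ¬ xBadAt G R x y) :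
    Good G Base (Cx G R x y) := by
  have hR := hG.toGoodR
  refine ⟨⟨fun u => cx_incl (hR.refl u), fun h1 h2 => Relation.TransGen.trans h1 h2,
    fun u v => ⟨cx_flip hR, cx_unflip hR⟩⟩, fun u v h => cx_incl (hG.base u v h), ?_⟩
  intro u v hstr hvu
  rcases cx_decomp hR hvu with h1 | ⟨c, L, d, h1, h2, h3⟩
  · exact hG.nc u v hstr h1
  · apply hbad
    apply mk_bad h2
    · -- U d c : R (aX y x d) (aX x y c)
      exact hR.trans h3 (hR.trans (hG.base u v hstr.1) h1)
    · -- ¬ U y x c d : ¬ R (aX x y c) (aX y x d)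
      intro hcd
      exact hG.nc u v hstr (hR.trans h1 (hR.trans hcd h3))

/-- A maximal good relation exists and is total. -/
theorem exists_total_good (hBase : Good G Base Base) :
    ∃ R : X → X → Prop, Good G Base R ∧ ∀ u v, R u v ∨ R v u := by
  classical
  let 𝒮 : Set (Set (X × X)) := {S | Good G Base (fun u v => (u, v) ∈ S)}
  have hbase𝒮 : {p : X × X | Base p.1 p.2} ∈ 𝒮 := hBase
  have H : ∀ c ⊆ 𝒮, IsChain (· ⊆ ·) c → c.Nonempty → ∃ ub ∈ 𝒮, ∀ s ∈ c, s ⊆ ub := by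
    intro c hc𝒮 hchain hcne
    refine ⟨⋃₀ c, ?_, fun s hs => Set.subset_sUnion_of_mem hs⟩
    obtain ⟨S0, hS0⟩ := hcne
    have hS0g := hc𝒮 hS0
    refine ⟨⟨fun u => Set.mem_sUnion.mpr ⟨S0, hS0, (hS0g.toGoodR.refl u)⟩, ?_, ?_⟩, ?_, ?_⟩
    · rintro u v w ⟨S1, hS1, h1⟩ ⟨S2, hS2, h2⟩
      rcases hchain.total hS1 hS2 with h | h
      · exact ⟨S2, hS2, (hc𝒮 hS2).toGoodR.trans (h h1) h2⟩
      · exact ⟨S1, hS1, (hc𝒮 hS1).toGoodR.trans h1 (h h2)⟩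
    · intro u v
      constructor
      · rintro ⟨S1, hS1, h1⟩
        exact ⟨S1, hS1, ((hc𝒮 hS1).toGoodR.flip u v).mp h1⟩
      · rintro ⟨S1, hS1, h1⟩
        exact ⟨S1, hS1, ((hc𝒮 hS1).toGoodR.flip u v).mpr h1⟩
    · intro u v h
      exact ⟨S0, hS0, hS0g.base u v h⟩
    · rintro u v hstr ⟨S1, hS1, h1⟩
      exact (hc𝒮 hS1).nc u v hstr h1
  obtain ⟨M, -, hMmax⟩ := zorn_subset_nonempty 𝒮 H _ hbase𝒮
  have hM𝒮 : Good G Base (fun u v => (u, v) ∈ M) := hMmax.1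
  · refine ⟨fun u v => (u, v) ∈ M, hM𝒮, ?_⟩
    intro u v
    by_contra hcon
    push_neg at hcon
    obtain ⟨huv, hvu⟩ := hcon
    have mkbad : ∀ a b : X, ¬ (a, b) ∈ M → xBadAt G (fun s t => (s, t) ∈ M) a b := by
      intro a b hab
      by_contra hb
      have hgood := cx_good hM𝒮 hb
      have hsub : M ⊆ {p : X × X | Cx G (fun s t => (s, t) ∈ M) a b p.1 p.2} :=
        fun p hp => cx_incl hp
      have hEq : {p : X × X | Cx G (fun s t => (s, t) ∈ M) a b p.1 p.2} = M :=
        Set.Subset.antisymm (hMmax.2 hgood hsub) hsub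
      apply hab
      have hxy : Cx G (fun s t => (s, t) ∈ M) a b a b := by
        have := cx_pair (G := G) (R := fun s t => (s, t) ∈ M) (x := a) (y := b) 0
        rwa [aX_zero, aX_zero] at this
      rw [← hEq]
      exact hxy
    obtain ⟨k, nf, hk, hnk, hUl, hSU⟩ := mkbad u v huv
    obtain ⟨l', mf, hl, hml, hWl, -⟩ := mkbad v u hvu
    exact Grand.grand hM𝒮.toGoodR hk hl hnk hml hUl hWl hSU

end Zorn

section Concrete

variable (A B C : LinOrderStrictAnti)
variable (iA : C.carrier ↪o A.carrier) (iB : C.carrier ↪o B.carrier)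

/-- The disjoint sum of the carriers. -/
abbrev Car : Type := A.carrier ⊕ B.carrier

/-- The combined operation. -/
def sg : Car A B → Car A B := Sum.map A.g B.g

/-- The amalgamated comparison relation on the sum. -/
def sle : Car A B → Car A B → Prop
  | .inl a, .inl a' => a ≤ a'
  | .inl a, .inr b => ∃ c, a ≤ iA c ∧ iB c ≤ b
  | .inr b, .inl a => ∃ c, b ≤ iB c ∧ iA c ≤ a
  | .inr b, .inr b' => b ≤ b'

variable {A B C} {iA iB}

lemma sle_refl (u : Car A B) : sle A B C iA iB u u := by
  cases u <;> simp [sle]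

lemma sle_trans {u v w : Car A B} (h1 : sle A B C iA iB u v) (h2 : sle A B C iA iB v w) :
    sle A B C iA iB u w := by
  rcases u with a | b <;> rcases v with a' | b' <;> rcases w with a'' | b''
  · exact le_trans h1 h2
  · obtain ⟨c, hc1, hc2⟩ := h2
    exact ⟨c, le_trans h1 hc1, hc2⟩
  · obtain ⟨c1, h11, h12⟩ := h1
    obtain ⟨c2, h21, h22⟩ := h2
    have hc : c1 ≤ c2 := iB.le_iff_le.mp (le_trans h12 h21)
    exact le_trans h11 (le_trans (iA.monotone hc) h22)
  · obtain ⟨c, hc1, hc2⟩ := h1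
    exact ⟨c, hc1, le_trans hc2 h2⟩
  · obtain ⟨c, hc1, hc2⟩ := h1
    exact ⟨c, hc1, le_trans hc2 h2⟩
  · obtain ⟨c1, h11, h12⟩ := h1
    obtain ⟨c2, h21, h22⟩ := h2
    have hc : c1 ≤ c2 := iA.le_iff_le.mp (le_trans h12 h21)
    exact le_trans h11 (le_trans (iB.monotone hc) h22)
  · obtain ⟨c, hc1, hc2⟩ := h2
    exact ⟨c, le_trans h1 hc1, hc2⟩
  · exact le_trans h1 h2

lemma sle_flip (hA : ∀ c, iA (C.g c) = A.g (iA c)) (hB : ∀ c, iB (C.g c) = B.g (iB c))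
    {u v : Car A B} (h : sle A B C iA iB u v) :
    sle A B C iA iB (sg A B v) (sg A B u) := by
  rcases u with a | b <;> rcases v with a' | b'
  · exact A.santi.antitone h
  · obtain ⟨c, hc1, hc2⟩ := h
    refine ⟨C.g c, ?_, ?_⟩
    · rw [hB]; exact B.santi.antitone hc2
    · rw [hA]; exact A.santi.antitone hc1
  · obtain ⟨c, hc1, hc2⟩ := h
    refine ⟨C.g c, ?_, ?_⟩
    · rw [hA]; exact A.santi.antitone hc2
    · rw [hB]; exact B.santi.antitone hc1
  · exact B.santi.antitone h

variable (A B C) (iA iB)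

/-- The ambient set: pairs `(u, n)` representing `ĝⁿ u`. -/
abbrev XX : Type := Car A B × ℤ

/-- The shift permutation, realizing the antitone operation. -/
def GX : Equiv.Perm (XX A B) where
  toFun p := (p.1, p.2 + 1)
  invFun p := (p.1, p.2 - 1)
  left_inv p := by simp
  right_inv p := by simp

/-- The base relation, generated by the orders, the identifications and the shifts. -/
inductive BaseR : XX A B → XX A B → Prop
  | ofA {a a' : A.carrier} (h : a ≤ a') : BaseR (.inl a, 0) (.inl a', 0)
  | ofB {b b' : B.carrier} (h : b ≤ b') : BaseR (.inr b, 0) (.inr b', 0)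
  | ofC (c : C.carrier) : BaseR (.inl (iA c), 0) (.inr (iB c), 0)
  | ofC' (c : C.carrier) : BaseR (.inr (iB c), 0) (.inl (iA c), 0)
  | shift (u : Car A B) (nn : ℤ) : BaseR (sg A B u, nn) (u, nn + 1)
  | shift' (u : Car A B) (nn : ℤ) : BaseR (u, nn + 1) (sg A B u, nn)
  | refl (p : XX A B) : BaseR p p
  | trans {p q r : XX A B} : BaseR p q → BaseR q r → BaseR p r
  | flipF {s t : Car A B} {i j : ℤ} : BaseR (s, i) (t, j) → BaseR (t, j + 1) (s, i + 1)
  | flipB {s t : Car A B} {i j : ℤ} : BaseR (t, j + 1) (s, i + 1) → BaseR (s, i) (t, j)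

variable {A B C iA iB}

/-- The explicit over-approximation, at stage `N`. -/
def ExplAt (N : ℕ) (p q : XX A B) : Prop :=
  Even N ∧ 0 ≤ p.2 + N ∧ 0 ≤ q.2 + N ∧
    sle A B C iA iB ((sg A B)^[(p.2 + N).toNat] p.1) ((sg A B)^[(q.2 + N).toNat] q.1)

def Expl (p q : XX A B) : Prop := ∃ N, ExplAt (iA := iA) (iB := iB) N p q

lemma explAt_up (hA : ∀ c, iA (C.g c) = A.g (iA c)) (hB : ∀ c, iB (C.g c) = B.g (iB c))
    {N : ℕ} {p q : XX A B} (h : ExplAt (iA := iA) (iB := iB) N p q) :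
    ExplAt (iA := iA) (iB := iB) (N + 2) p q := by
  obtain ⟨hN, hp, hq, hs⟩ := h
  have key : ∀ (w : Car A B) (r : ℕ), (sg A B)^[r + 1 + 1] w
      = sg A B (sg A B ((sg A B)^[r] w)) := by
    intro w r
    rw [Function.iterate_succ_apply', Function.iterate_succ_apply']
  refine ⟨hN.add ⟨1, rfl⟩, by omega, by omega, ?_⟩
  have e1 : (p.2 + (N + 2 : ℕ)).toNat = (p.2 + N).toNat + 1 + 1 := by
    push_cast; omega
  have e2 : (q.2 + (N + 2 : ℕ)).toNat = (q.2 + N).toNat + 1 + 1 := by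
    push_cast; omega
  rw [e1, e2, key, key]
  exact sle_flip hA hB (sle_flip hA hB hs)

lemma explAt_upTo (hA : ∀ c, iA (C.g c) = A.g (iA c)) (hB : ∀ c, iB (C.g c) = B.g (iB c))
    {N : ℕ} {p q : XX A B} (h : ExplAt (iA := iA) (iB := iB) N p q) :
    ∀ t : ℕ, ExplAt (iA := iA) (iB := iB) (N + 2 * t) p q := by
  intro t
  induction t with
  | zero => simpa using h
  | succ t ih =>
      have := explAt_up hA hB ih
      have he : N + 2 * t + 2 = N + 2 * (t + 1) := by ring
      rwa [he] at this

lemma base_sub_expl (hA : ∀ c, iA (C.g c) = A.g (iA c)) (hB : ∀ c, iB (C.g c) = B.g (iB c))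
    {p q : XX A B} (h : BaseR A B C iA iB p q) :
    Expl (iA := iA) (iB := iB) p q := by
  induction h with
  | ofA h => exact ⟨0, ⟨0, rfl⟩, by simp, by simp, by simpa [sle] using h⟩
  | ofB h => exact ⟨0, ⟨0, rfl⟩, by simp, by simp, by simpa [sle] using h⟩
  | ofC c => exact ⟨0, ⟨0, rfl⟩, by simp, by simp, ⟨c, le_refl _, le_refl _⟩⟩
  | ofC' c => exact ⟨0, ⟨0, rfl⟩, by simp, by simp, ⟨c, le_refl _, le_refl _⟩⟩
  | shift u nn =>
      set N : ℕ := 2 * ((-nn).toNat + 1) with hNdef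
      have hN1 : (0:ℤ) ≤ nn + N := by simp only [hNdef]; push_cast; omega
      have hN2 : (0:ℤ) ≤ nn + 1 + N := by simp only [hNdef]; push_cast; omega
      refine ⟨N, ⟨(-nn).toNat + 1, by rw [hNdef]; ring⟩, hN1, hN2, ?_⟩
      show sle A B C iA iB ((sg A B)^[(nn + (N:ℤ)).toNat] (sg A B u))
        ((sg A B)^[(nn + 1 + (N:ℤ)).toNat] u)
      have e0 : (nn + 1 + (N:ℤ)).toNat = (nn + (N:ℤ)).toNat + 1 := by omega
      rw [e0, Function.iterate_succ_apply]
      exact sle_refl _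
  | shift' u nn =>
      set N : ℕ := 2 * ((-nn).toNat + 1) with hNdef
      have hN1 : (0:ℤ) ≤ nn + N := by simp only [hNdef]; push_cast; omega
      have hN2 : (0:ℤ) ≤ nn + 1 + N := by simp only [hNdef]; push_cast; omega
      refine ⟨N, ⟨(-nn).toNat + 1, by rw [hNdef]; ring⟩, hN2, hN1, ?_⟩
      show sle A B C iA iB ((sg A B)^[(nn + 1 + (N:ℤ)).toNat] u)
        ((sg A B)^[(nn + (N:ℤ)).toNat] (sg A B u))
      have e0 : (nn + 1 + (N:ℤ)).toNat = (nn + (N:ℤ)).toNat + 1 := by omega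
      rw [e0, Function.iterate_succ_apply]
      exact sle_refl _
  | refl p =>
      set N : ℕ := 2 * ((-p.2).toNat + 1) with hNdef
      have hN1 : (0:ℤ) ≤ p.2 + N := by simp only [hNdef]; push_cast; omega
      exact ⟨N, ⟨(-p.2).toNat + 1, by rw [hNdef]; ring⟩, hN1, hN1, sle_refl _⟩
  | trans h1 h2 ih1 ih2 =>
      obtain ⟨N1, hN1⟩ := ih1
      obtain ⟨N2, hN2⟩ := ih2
      obtain ⟨t1, ht1⟩ := hN1.1
      obtain ⟨t2, ht2⟩ := hN2.1
      have h1' := explAt_upTo hA hB hN1 t2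
      have h2' := explAt_upTo hA hB hN2 t1
      have he : N2 + 2 * t1 = N1 + 2 * t2 := by omega
      rw [he] at h2'
      refine ⟨N1 + 2 * t2, h1'.1, h1'.2.1, h2'.2.2.1, sle_trans h1'.2.2.2 h2'.2.2.2⟩
  | flipF h ih =>
      obtain ⟨N, hN, hp, hq, hs⟩ := ih
      rename_i s t i j
      refine ⟨N, hN, ?_, ?_, ?_⟩
      · show (0 : ℤ) ≤ j + 1 + N
        simp only [Prod.snd] at hq
        omega
      · show (0 : ℤ) ≤ i + 1 + N
        simp only [Prod.snd] at hp
        omega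
      · show sle A B C iA iB ((sg A B)^[(j + 1 + N).toNat] t) ((sg A B)^[(i + 1 + N).toNat] s)
        simp only [Prod.snd, Prod.fst] at hp hq hs
        have e1 : (j + 1 + N).toNat = (j + N).toNat + 1 := by omega
        have e2 : (i + 1 + N).toNat = (i + N).toNat + 1 := by omega
        rw [e1, e2, Function.iterate_succ_apply', Function.iterate_succ_apply']
        exact sle_flip hA hB hs
  | flipB h ih =>
      obtain ⟨N, hN, hp, hq, hs⟩ := ih
      rename_i s t i j
      simp only [Prod.snd, Prod.fst] at hp hq hs
      refine ⟨N + 2, hN.add ⟨1, rfl⟩, ?_, ?_, ?_⟩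
      · show (0 : ℤ) ≤ i + (N + 2 : ℕ)
        push_cast; omega
      · show (0 : ℤ) ≤ j + (N + 2 : ℕ)
        push_cast; omega
      · show sle A B C iA iB ((sg A B)^[(i + (N + 2 : ℕ)).toNat] s) ((sg A B)^[(j + (N + 2 : ℕ)).toNat] t)
        have e1 : (i + (N + 2 : ℕ)).toNat = (i + 1 + N).toNat + 1 := by push_cast; omega
        have e2 : (j + (N + 2 : ℕ)).toNat = (j + 1 + N).toNat + 1 := by push_cast; omega
        rw [e1, e2, Function.iterate_succ_apply', Function.iterate_succ_apply']
        exact sle_flip hA hB hs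

/-- Even iterates of a strictly antitone map are strictly monotone. -/
lemma even_iterate_strictMono {α : Type*} [LinearOrder α] {g : α → α} (hg : StrictAnti g)
    (t : ℕ) : StrictMono (g^[2 * t]) := by
  have h2 : StrictMono (g^[2]) := by
    intro u v huv
    exact hg (hg huv)
  have : g^[2 * t] = (g^[2])^[t] := Function.iterate_mul g 2 t
  rw [this]
  exact h2.iterate t

lemma sg_iterate_inl (t : ℕ) (a : A.carrier) :
    (sg A B)^[t] (Sum.inl a) = Sum.inl (A.g^[t] a) := by
  induction t with
  | zero => rfl
  | succ t ih => rw [Function.iterate_succ_apply', Function.iterate_succ_apply', ih]; rfl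

lemma sg_iterate_inr (t : ℕ) (b : B.carrier) :
    (sg A B)^[t] (Sum.inr b) = Sum.inr (B.g^[t] b) := by
  induction t with
  | zero => rfl
  | succ t ih => rw [Function.iterate_succ_apply', Function.iterate_succ_apply', ih]; rfl

/-- Conservativity over `A`. -/
lemma base_cons_A (hA : ∀ c, iA (C.g c) = A.g (iA c)) (hB : ∀ c, iB (C.g c) = B.g (iB c))
    {a a' : A.carrier}
    (h : BaseR A B C iA iB (.inl a, 0) (.inl a', 0)) : a ≤ a' := by
  obtain ⟨N, hN, -, -, hs⟩ := base_sub_expl hA hB h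
  obtain ⟨t, ht⟩ := hN
  simp only [Prod.fst, Prod.snd, zero_add, Int.toNat_natCast] at hs
  rw [sg_iterate_inl, sg_iterate_inl] at hs
  have hs' : A.g^[N] a ≤ A.g^[N] a' := hs
  have hNe : N = 2 * t := by omega
  rw [hNe] at hs'
  exact (even_iterate_strictMono A.santi t).le_iff_le.mp hs'

/-- Conservativity over `B`. -/
lemma base_cons_B (hA : ∀ c, iA (C.g c) = A.g (iA c)) (hB : ∀ c, iB (C.g c) = B.g (iB c))
    {b b' : B.carrier}
    (h : BaseR A B C iA iB (.inr b, 0) (.inr b', 0)) : b ≤ b' := by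
  obtain ⟨N, hN, -, -, hs⟩ := base_sub_expl hA hB h
  obtain ⟨t, ht⟩ := hN
  simp only [Prod.fst, Prod.snd, zero_add, Int.toNat_natCast] at hs
  rw [sg_iterate_inr, sg_iterate_inr] at hs
  have hs' : B.g^[N] b ≤ B.g^[N] b' := hs
  have hNe : N = 2 * t := by omega
  rw [hNe] at hs'
  exact (even_iterate_strictMono B.santi t).le_iff_le.mp hs'

/-- The base relation is good. -/
lemma base_good : Good (GX A B) (BaseR A B C iA iB) (BaseR A B C iA iB) := by
  refine ⟨⟨BaseR.refl, fun h1 h2 => BaseR.trans h1 h2, ?_⟩, fun u v h => h, fun u v hstr h => hstr.2 h⟩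
  intro u v
  constructor
  · intro h
    exact BaseR.flipF h
  · intro h
    exact BaseR.flipB h

end Concrete

section Final

theorem amalgamation
    (A B C : LinOrderStrictAnti)
    (iA : C.carrier ↪o A.carrier) (iB : C.carrier ↪o B.carrier)
    (hA : ∀ c, iA (C.g c) = A.g (iA c))
    (hB : ∀ c, iB (C.g c) = B.g (iB c)) :
    ∃ (D : LinOrderStrictAnti) (jA : A.carrier ↪o D.carrier)
      (jB : B.carrier ↪o D.carrier),
      (∀ a, jA (A.g a) = D.g (jA a)) ∧
      (∀ b, jB (B.g b) = D.g (jB b)) ∧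
      (∀ c, jA (iA c) = jB (iB c)) := by
  classical
  obtain ⟨R, hRg, hRt⟩ := exists_total_good (G := GX A B)
    (Base := BaseR A B C iA iB) (base_good (iA := iA) (iB := iB))
  have hrefl := hRg.toGoodR.refl
  have htrans : ∀ {u v w : XX A B}, R u v → R v w → R u w := hRg.toGoodR.trans
  have hflip := hRg.toGoodR.flip
  let st : Setoid (XX A B) := ⟨fun u v => R u v ∧ R v u,
    ⟨fun u => ⟨hrefl u, hrefl u⟩, fun h => ⟨h.2, h.1⟩,
     fun h1 h2 => ⟨htrans h1.1 h2.1, htrans h2.2 h1.2⟩⟩⟩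
  let D0 := Quotient st
  let leD : D0 → D0 → Prop := Quotient.lift₂ R (by
    intro a b a' b' ha hb
    apply propext
    constructor
    · intro h; exact htrans (htrans ha.2 h) hb.1
    · intro h; exact htrans (htrans ha.1 h) hb.2)
  letI linD : LinearOrder D0 := {
    le := leD
    lt := fun a b => leD a b ∧ ¬ leD b a
    le_refl := by rintro ⟨u⟩; exact hrefl u
    le_trans := by rintro ⟨u⟩ ⟨v⟩ ⟨w⟩ h1 h2; exact htrans h1 h2
    le_antisymm := by rintro ⟨u⟩ ⟨v⟩ h1 h2; exact Quotient.sound ⟨h1, h2⟩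
    le_total := by rintro ⟨u⟩ ⟨v⟩; exact hRt u v
    toDecidableLE := fun _ _ => Classical.propDecidable _ }
  let gD : D0 → D0 := Quotient.map (GX A B) (by
    intro u v huv
    exact ⟨(hflip v u).mp huv.2, (hflip u v).mp huv.1⟩)
  have santiD : @StrictAnti D0 D0 linD.toPreorder linD.toPreorder gD := by
    rintro ⟨u⟩ ⟨v⟩ huv
    change leD _ _ ∧ ¬ leD _ _ at huv ⊢
    obtain ⟨h1, h2⟩ := huv
    constructor
    · exact (hflip u v).mp h1
    · intro hco
      exact h2 ((hflip v u).mpr hco)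
  let jA : @OrderEmbedding A.carrier D0 _ linD.toLE := @OrderEmbedding.ofMapLEIff _ _ _ linD.toPreorder
    (fun a => Quotient.mk st (Sum.inl a, 0)) (by
      intro a a'
      constructor
      · intro h
        by_contra hcon
        push_neg at hcon
        have hstr : Strict0 (BaseR A B C iA iB) (Sum.inl a', 0) (Sum.inl a, 0) :=
          ⟨BaseR.ofA (le_of_lt hcon),
           fun hb => absurd (base_cons_A hA hB hb) (not_le.mpr hcon)⟩
        exact hRg.nc _ _ hstr h
      · intro h
        exact hRg.base _ _ (BaseR.ofA h))
  let jB : @OrderEmbedding B.carrier D0 _ linD.toLE := @OrderEmbedding.ofMapLEIff _ _ _ linD.toPreorder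
    (fun b => Quotient.mk st (Sum.inr b, 0)) (by
      intro b b'
      constructor
      · intro h
        by_contra hcon
        push_neg at hcon
        have hstr : Strict0 (BaseR A B C iA iB) (Sum.inr b', 0) (Sum.inr b, 0) :=
          ⟨BaseR.ofB (le_of_lt hcon),
           fun hb => absurd (base_cons_B hA hB hb) (not_le.mpr hcon)⟩
        exact hRg.nc _ _ hstr h
      · intro h
        exact hRg.base _ _ (BaseR.ofB h))
  refine ⟨{ carrier := D0, linOrd := linD, g := gD, santi := santiD }, jA, jB, ?_, ?_, ?_⟩
  · intro a
    show Quotient.mk st (Sum.inl (A.g a), 0) = gD (Quotient.mk st (Sum.inl a, 0))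
    show Quotient.mk st (Sum.inl (A.g a), 0) = Quotient.mk st (GX A B (Sum.inl a, 0))
    apply Quotient.sound
    exact ⟨hRg.base _ _ (BaseR.shift (Sum.inl a) 0), hRg.base _ _ (BaseR.shift' (Sum.inl a) 0)⟩
  · intro b
    show Quotient.mk st (Sum.inr (B.g b), 0) = Quotient.mk st (GX A B (Sum.inr b, 0))
    apply Quotient.sound
    exact ⟨hRg.base _ _ (BaseR.shift (Sum.inr b) 0), hRg.base _ _ (BaseR.shift' (Sum.inr b) 0)⟩
  · intro c
    show Quotient.mk st (Sum.inl (iA c), 0) = Quotient.mk st (Sum.inr (iB c), 0)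
    apply Quotient.sound
    exact ⟨hRg.base _ _ (BaseR.ofC c), hRg.base _ _ (BaseR.ofC' c)⟩

end Final

end AmalgLOSA

/-- The class of linearly ordered sets with one strict order reversing unary
operation has the amalgamation property. -/
theorem linear_orders_one_strict_antitone_op_amalgamation
    (A B C : LinOrderStrictAnti)
    (iA : C.carrier ↪o A.carrier) (iB : C.carrier ↪o B.carrier)
    (hA : ∀ c, iA (C.g c) = A.g (iA c))
    (hB : ∀ c, iB (C.g c) = B.g (iB c)) :
    ∃ (D : LinOrderStrictAnti) (jA : A.carrier ↪o D.carrier)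
      (jB : B.carrier ↪o D.carrier),
      (∀ a, jA (A.g a) = D.g (jA a)) ∧
      (∀ b, jB (B.g b) = D.g (jB b)) ∧
      (∀ c, jA (iA c) = jB (iB c)) :=
  AmalgLOSA.amalgamation A B C iA iB hA hB
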